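/- Let E be a Dedekind complete vector lattice, let (T_α) be a decreasing net of positive order continuous operators on E, and let F be an order dense vector sublattice of E. If T_α x order-converges to 0 in E for every x ∈ F, then T_α x order-converges to 0 in E for every x ∈ E. -/

import Mathlib

variable (E : Type*) [AddCommGroup E] [ConditionallyCompleteLattice E] [Module ℝ E]
  [CovariantClass E E (· + ·) (· ≤ ·)] [PosSMulMono ℝ E]

/-- The order on order bounded operators: `A ≤ B` iff `A x ≤ B x` for all `x ≥ 0`. -/
def opLE (A B : E →ₗ[ℝ] E) : Prop := ∀ x : E, 0 ≤ x → A x ≤ B x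

/-- An operator is order bounded when it maps order bounded sets to order bounded sets. -/
def IsOrderBoundedOp (T : E →ₗ[ℝ] E) : Prop :=
  ∀ a b : E, ∃ c d : E, ∀ x : E, a ≤ x → x ≤ b → c ≤ T x ∧ T x ≤ d

/-- Band preserving: `T x` lies in the band generated by `x`; equivalently `T x ⊥ y`
whenever `x ⊥ y`. -/
def IsBandPreserving (T : E →ₗ[ℝ] E) : Prop :=
  ∀ x y : E, |x| ⊓ |y| = 0 → |T x| ⊓ |y| = 0

/-- An orthomorphism is an order bounded band preserving linear operator. -/
def IsOrthomorphism (T : E →ₗ[ℝ] E) : Prop :=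
  IsOrderBoundedOp E T ∧ IsBandPreserving E T

/-- Membership in the band generated by a set `S` (in an Archimedean vector lattice this is
the double disjoint complement of `S`). -/
def memBandGen (S : Set E) (w : E) : Prop :=
  ∀ u : E, (∀ s ∈ S, |u| ⊓ |s| = 0) → |u| ⊓ |w| = 0

/-- `P` is the band projection onto the band `B`: it maps into `B` and `x - P x` is
disjoint from `B` for every `x`. -/
def IsBandProjectionOnto (B : Set E) (P : E →ₗ[ℝ] E) : Prop :=
  (∀ x : E, P x ∈ B) ∧ (∀ x : E, ∀ b ∈ B, |x - P x| ⊓ |b| = 0)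

/-- Order convergence of a net: there is a downward directed set `D` with infimum `0`
such that the net is eventually dominated by every member of `D`. -/
def OrderConvNet {ι : Type*} [Preorder ι] (y : ι → E) (l : E) : Prop :=
  ∃ D : Set E, D.Nonempty ∧ DirectedOn (· ≥ ·) D ∧ IsGLB D 0 ∧
    ∀ d ∈ D, ∃ i₀ : ι, ∀ i : ι, i₀ ≤ i → |y i - l| ≤ d

/-- Unbounded order convergence of a net. -/
def UOConvNet {ι : Type*} [Preorder ι] (y : ι → E) (l : E) : Prop :=
  ∀ u : E, 0 ≤ u → OrderConvNet E (fun i => |y i - l| ⊓ u) 0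

/-- Order convergence of a net of operators, in the operator order of the order bounded
operators: there is a downward directed set `D` of operators whose infimum among the
order bounded operators is `0`, eventually dominating `|T i - L|`. -/
def OpOrderConvNet {ι : Type*} [Preorder ι] (T : ι → E →ₗ[ℝ] E) (L : E →ₗ[ℝ] E) : Prop :=
  ∃ D : Set (E →ₗ[ℝ] E), D.Nonempty ∧
    DirectedOn (fun A B => opLE E B A) D ∧
    (∀ d ∈ D, opLE E 0 d) ∧
    (∀ C : E →ₗ[ℝ] E, IsOrderBoundedOp E C → (∀ d ∈ D, opLE E C d) → opLE E C 0) ∧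
    ∀ d ∈ D, ∃ i₀ : ι, ∀ i : ι, i₀ ≤ i → opLE E (L - T i) d ∧ opLE E (T i - L) d


/-- if a decreasing net of positive order continuous operators on a Dedekind
complete vector lattice converges in order to `0` pointwise on an order dense vector
sublattice `F`, then it converges in order to `0` pointwise on all of `E`. (Order
continuity of a positive operator is expressed by preservation of infima of downward
directed sets.) -/
theorem stmt13
    {ι : Type*} [Preorder ι] [IsDirected ι (· ≤ ·)] [Nonempty ι]
    (T : ι → E →ₗ[ℝ] E)
    (hdec : ∀ i j : ι, i ≤ j → opLE E (T j) (T i))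
    (hpos : ∀ i, opLE E 0 (T i))
    (hoc : ∀ i, ∀ D : Set E, D.Nonempty → DirectedOn (· ≥ ·) D → IsGLB D 0 →
      IsGLB ((T i) '' D) 0)
    (F : Submodule ℝ E)
    (hlat : ∀ x y : E, x ∈ F → y ∈ F → x ⊔ y ∈ F)
    (hdense : ∀ x : E, 0 < x → ∃ y ∈ F, 0 < y ∧ y ≤ x)
    (hF : ∀ x ∈ F, OrderConvNet E (fun i => T i x) 0) :
    ∀ x : E, OrderConvNet E (fun i => T i x) 0 := by
  -- Key lemma: for `0 ≤ x`, any lower bound of the range of `fun i => T i x` is `≤ 0`.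
  have key : ∀ x : E, 0 ≤ x → ∀ c ∈ lowerBounds (Set.range fun i => T i x), c ≤ 0 := by
    intro x hx c hc
    set S : Set E := {y : E | y ∈ F ∧ 0 ≤ y ∧ y ≤ x} with hS
    have h0S : (0 : E) ∈ S := ⟨F.zero_mem, le_refl 0, hx⟩
    have hSne : S.Nonempty := ⟨0, h0S⟩
    have hSbdd : BddAbove S := ⟨x, fun y hy => hy.2.2⟩
    set Dx : Set E := (fun y => x - y) '' S with hDx
    have hDxne : Dx.Nonempty := ⟨x - 0, ⟨0, h0S, rfl⟩⟩
    have hDxdir : DirectedOn (· ≥ ·) Dx := by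
      rintro _ ⟨y₁, hy₁, rfl⟩ _ ⟨y₂, hy₂, rfl⟩
      refine ⟨x - (y₁ ⊔ y₂), ⟨y₁ ⊔ y₂, ⟨hlat _ _ hy₁.1 hy₂.1,
        le_trans hy₁.2.1 le_sup_left, sup_le hy₁.2.2 hy₂.2.2⟩, rfl⟩,
        sub_le_sub_left le_sup_left x, sub_le_sub_left le_sup_right x⟩
    have hDxglb : IsGLB Dx 0 := by
      constructor
      · rintro _ ⟨y, hy, rfl⟩
        exact sub_nonneg.2 hy.2.2
      · intro c' hc'
        set s := sSup S with hs
        have hsx : s ≤ x := csSup_le hSne fun y hy => hy.2.2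
        have hcs : c' ≤ x - s := by
          refine le_sub_comm.1 (csSup_le hSne fun y hy => ?_)
          exact le_sub_comm.1 (hc' ⟨y, hy, rfl⟩)
        have hxs : x ≤ s := by
          by_contra hcon
          have hslt : s < x := lt_of_le_of_ne hsx (fun h => hcon h.ge)
          have hpos' : 0 < x - s := sub_pos.2 hslt
          obtain ⟨y₀, hy₀F, hy₀pos, hy₀le⟩ := hdense (x - s) hpos'
          have hstep : ∀ y ∈ S, y + y₀ ∈ S := by
            intro y hy
            refine ⟨F.add_mem hy.1 hy₀F, add_nonneg hy.2.1 hy₀pos.le, ?_⟩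
            have hys : y ≤ s := le_csSup hSbdd hy
            calc y + y₀ ≤ s + (x - s) := add_le_add hys hy₀le
              _ = x := by abel
          have hle : s ≤ s - y₀ := csSup_le hSne fun y hy =>
            le_sub_iff_add_le.2 (le_csSup hSbdd (hstep y hy))
          exact absurd ((le_sub_self_iff s).1 hle) (LT.lt.not_ge hy₀pos)
        exact hcs.trans (sub_nonpos.2 hxs)
    obtain ⟨i₀⟩ := ‹Nonempty ι›
    have hglbT := hoc i₀ Dx hDxne hDxdir hDxglb
    refine hglbT.2 ?_
    rintro _ ⟨_, ⟨y, hy, rfl⟩, rfl⟩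
    -- show c ≤ T i₀ (x - y)
    obtain ⟨D', hD'ne, hD'dir, hD'glb, hD'ev⟩ := hF y hy.1
    have hsub : c - T i₀ (x - y) ≤ 0 := by
      refine hD'glb.2 ?_
      rintro d hd
      obtain ⟨i₁, h1⟩ := hD'ev d hd
      obtain ⟨i₂, h20, h21⟩ := directed_of (· ≤ ·) i₀ i₁
      have hTy : T i₂ y ≤ d := le_trans (le_abs_self _) (by simpa using h1 i₂ h21)
      have hTxy : T i₂ (x - y) ≤ T i₀ (x - y) :=
        hdec i₀ i₂ h20 (x - y) (sub_nonneg.2 hy.2.2)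
      have hcx : c ≤ T i₂ x := hc ⟨i₂, rfl⟩
      have hmap : T i₂ x - T i₂ (x - y) = T i₂ y := by
        rw [← map_sub]; congr 1; abel
      calc c - T i₀ (x - y) ≤ T i₂ x - T i₂ (x - y) := sub_le_sub hcx hTxy
        _ = T i₂ y := hmap
        _ ≤ d := hTy
    exact sub_nonpos.1 hsub
  intro x
  refine ⟨Set.range fun i => T i |x|, Set.range_nonempty _, ?_, ?_, ?_⟩
  · rintro _ ⟨i, rfl⟩ _ ⟨j, rfl⟩
    obtain ⟨k, hik, hjk⟩ := directed_of (· ≤ ·) i j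
    exact ⟨T k |x|, ⟨k, rfl⟩, hdec i k hik _ (abs_nonneg x), hdec j k hjk _ (abs_nonneg x)⟩
  · constructor
    · rintro _ ⟨i, rfl⟩
      exact hpos i _ (abs_nonneg x)
    · intro c hcl
      exact key |x| (abs_nonneg x) c hcl
  · rintro _ ⟨i, rfl⟩
    refine ⟨i, fun j hij => ?_⟩
    have h1 : |T j x| ≤ T j |x| := by
      refine abs_le'.2 ⟨?_, ?_⟩
      · have h := hpos j (|x| - x) (sub_nonneg.2 (le_abs_self x))
        rw [LinearMap.zero_apply, map_sub] at h
        exact sub_nonneg.1 h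
      · have h0 : (0 : E) ≤ x + |x| := by
          simpa using add_le_add_right (neg_le_abs x) x
        have h := hpos j (x + |x|) h0
        rw [LinearMap.zero_apply, map_add] at h
        rw [add_comm] at h
        exact neg_le_iff_add_nonneg.2 h
    have h2 : T j |x| ≤ T i |x| := hdec i j hij _ (abs_nonneg x)
    simpa using h1.trans h2
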